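/- Let $1<p<\infty$, let $\Omega\subset\mathbb{R}^n$ be bounded open, and let $u$ be a renormalized-type solution in the sense that for every integer $k>0$, $T_k(u)=\max\{-k,\min\{k,u\}\}\in W^{1,p}_0(\Omega)$ and $-\mathrm{div}\,\mathcal{A}(x,\nabla T_k(u))=\mu_k$ with $\mu_k=\chi_{\{|u|<k\}}\mu_0+\lambda_k^+-\lambda_k^-$, where $\lambda_k^\pm$ are nonnegative measures concentrated on $\{u=\pm k\}$ converging narrowly to $\mu_s^\pm$, and $|u|<\infty$ $\mu_0$-a.e. Then $|\mu_k|\to|\mu|$ narrowly, where $\mu=\mu_0+\mu_s^+-\mu_s^-$ with $\mu_s^+\perp\mu_s^-$ and $\mu_s^\pm\perp\mu_0$. -/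

import Mathlib

open MeasureTheory Filter

/-- If `νp, νm` are finite measures mutually singular with each other and with `|s|`, then
`|s + νp - νm| = |s| + νp + νm`. -/
lemma tv_sum_singular {X : Type*} [MeasurableSpace X] (s : SignedMeasure X)
    (νp νm : Measure X) [IsFiniteMeasure νp] [IsFiniteMeasure νm]
    (h1 : νp.MutuallySingular νm) (h2 : νp.MutuallySingular s.totalVariation)
    (h3 : νm.MutuallySingular s.totalVariation) :
    (s + νp.toSignedMeasure - νm.toSignedMeasure).totalVariation
      = s.totalVariation + νp + νm := by
  set p := s.toJordanDecomposition.posPart with hp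
  set m := s.toJordanDecomposition.negPart with hm
  have hpm : p.MutuallySingular m := s.toJordanDecomposition.mutuallySingular
  have htv : s.totalVariation = p + m := rfl
  rw [htv] at h2 h3
  obtain ⟨h2p, h2m⟩ := Measure.MutuallySingular.add_right_iff.mp h2
  obtain ⟨h3p, h3m⟩ := Measure.MutuallySingular.add_right_iff.mp h3
  have hsing : (p + νp).MutuallySingular (m + νm) :=
    Measure.MutuallySingular.add_left
      (Measure.MutuallySingular.add_right hpm h3p.symm)
      (Measure.MutuallySingular.add_right h2m h1)
  set j : JordanDecomposition X := ⟨p + νp, m + νm, hsing⟩ with hj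
  have heq : s + νp.toSignedMeasure - νm.toSignedMeasure = j.toSignedMeasure := by
    show _ = (p + νp).toSignedMeasure - (m + νm).toSignedMeasure
    rw [Measure.toSignedMeasure_add, Measure.toSignedMeasure_add]
    have hs : s = p.toSignedMeasure - m.toSignedMeasure :=
      (s.toSignedMeasure_toJordanDecomposition).symm
    have habel : (p.toSignedMeasure - m.toSignedMeasure) + νp.toSignedMeasure -
        νm.toSignedMeasure = p.toSignedMeasure + νp.toSignedMeasure -
        (m.toSignedMeasure + νm.toSignedMeasure) := by abel
    rw [← hs] at habel
    exact habel
  rw [SignedMeasure.totalVariation, SignedMeasure.toJordanDecomposition_eq heq]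
  show (p + νp) + (m + νm) = (p + m) + νp + νm
  abel

instance tv_isFiniteMeasure {X : Type*} [MeasurableSpace X] (s : SignedMeasure X) :
    IsFiniteMeasure s.totalVariation := by
  unfold SignedMeasure.totalVariation
  infer_instance

/-- The total variation of the restriction of a signed measure to a measurable set is
the restriction of the total variation. -/
lemma tv_restrict {X : Type*} [MeasurableSpace X] (s : SignedMeasure X) {S : Set X}
    (hS : MeasurableSet S) :
    SignedMeasure.totalVariation (s.restrict S) = s.totalVariation.restrict S := by
  set p := s.toJordanDecomposition.posPart with hp
  set m := s.toJordanDecomposition.negPart with hm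
  have hpm : p.MutuallySingular m := s.toJordanDecomposition.mutuallySingular
  have hsing : (p.restrict S).MutuallySingular (m.restrict S) :=
    hpm.mono Measure.restrict_le_self Measure.restrict_le_self
  set j : JordanDecomposition X := ⟨p.restrict S, m.restrict S, hsing⟩ with hj
  have heq : s.restrict S = j.toSignedMeasure := by
    ext E hE
    rw [VectorMeasure.restrict_apply _ hS hE]
    show _ = ((p.restrict S).toSignedMeasure - (m.restrict S).toSignedMeasure) E
    rw [Measure.toSignedMeasure_sub_apply hE, measureReal_restrict_apply hE,
      measureReal_restrict_apply hE]
    conv_lhs => rw [← s.toSignedMeasure_toJordanDecomposition]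
    show (p.toSignedMeasure - m.toSignedMeasure) (E ∩ S) = _
    rw [Measure.toSignedMeasure_sub_apply (hE.inter hS)]
  rw [SignedMeasure.totalVariation, SignedMeasure.toJordanDecomposition_eq heq]
  show p.restrict S + m.restrict S = (p + m).restrict S
  rw [Measure.restrict_add]

/-- For a renormalized-type solution, the total variations `|μ_k|` of the truncated data
`μ_k = χ_{{|u|<k}} μ₀ + λ_k^+ - λ_k^-` converge narrowly to `|μ|`, where
`μ = μ₀ + μ_s^+ - μ_s^-` with the three pieces mutually singular. -/
theorem stmt19 {X : Type*} [MeasurableSpace X] [TopologicalSpace X]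
    [OpensMeasurableSpace X]
    (u : X → ℝ) (hu : Measurable u)
    (μ₀ : SignedMeasure X) (μsp μsm : Measure X)
    [IsFiniteMeasure μsp] [IsFiniteMeasure μsm]
    (lamP lamM : ℕ → Measure X)
    [∀ k, IsFiniteMeasure (lamP k)] [∀ k, IsFiniteMeasure (lamM k)]
    (hconcP : ∀ k : ℕ, lamP (k + 1) {x | u x ≠ ((k : ℝ) + 1)} = 0)
    (hconcM : ∀ k : ℕ, lamM (k + 1) {x | u x ≠ -((k : ℝ) + 1)} = 0)
    (hnarrowP : ∀ f : BoundedContinuousFunction X ℝ,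
      Tendsto (fun k => ∫ x, f x ∂(lamP (k + 1))) atTop (nhds (∫ x, f x ∂μsp)))
    (hnarrowM : ∀ f : BoundedContinuousFunction X ℝ,
      Tendsto (fun k => ∫ x, f x ∂(lamM (k + 1))) atTop (nhds (∫ x, f x ∂μsm)))
    (hsing1 : μsp.MutuallySingular μsm)
    (hsing2 : μsp.MutuallySingular μ₀.totalVariation)
    (hsing3 : μsm.MutuallySingular μ₀.totalVariation) :
    ∀ f : BoundedContinuousFunction X ℝ,
      Tendsto (fun k : ℕ => ∫ x, f x ∂(SignedMeasure.totalVariation (μ₀.restrict {x | |u x| < ((k : ℝ) + 1)} +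
          (lamP (k + 1)).toSignedMeasure - (lamM (k + 1)).toSignedMeasure)))
        atTop
        (nhds (∫ x, f x ∂(SignedMeasure.totalVariation (μ₀ + μsp.toSignedMeasure -
          μsm.toSignedMeasure)))) := by
  intro f
  -- measurability of the truncation sets
  have hSm : ∀ k : ℕ, MeasurableSet {x | |u x| < ((k : ℝ) + 1)} := fun k =>
    measurableSet_lt hu.abs measurable_const
  -- identify |μ_k|
  have key : ∀ k : ℕ,
      SignedMeasure.totalVariation (μ₀.restrict {x | |u x| < ((k : ℝ) + 1)} +
        (lamP (k + 1)).toSignedMeasure - (lamM (k + 1)).toSignedMeasure)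
      = μ₀.totalVariation.restrict {x | |u x| < ((k : ℝ) + 1)} + lamP (k + 1) + lamM (k + 1) := by
    intro k
    set S := {x | |u x| < ((k : ℝ) + 1)} with hSdef
    have hPset : MeasurableSet {x | u x ≠ ((k : ℝ) + 1)} :=
      (hu (measurableSet_singleton ((k : ℝ) + 1))).compl
    have hP : (lamP (k + 1)).MutuallySingular
        (SignedMeasure.totalVariation (μ₀.restrict S)) := by
      refine ⟨{x | u x ≠ ((k : ℝ) + 1)}, hPset, hconcP k, ?_⟩
      rw [tv_restrict _ (hSm k), Measure.restrict_apply hPset.compl]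
      convert measure_empty
      · ext x
        simp only [Set.mem_inter_iff, Set.mem_compl_iff, Set.mem_setOf_eq, not_not,
          Set.mem_empty_iff_false, iff_false, not_and, hSdef]
        intro hx
        rw [hx]
        simp only [Set.mem_setOf_eq, not_lt]
        rw [abs_of_nonneg (by positivity)]
      · infer_instance
    have hMset : MeasurableSet {x | u x ≠ -((k : ℝ) + 1)} :=
      (hu (measurableSet_singleton (-((k : ℝ) + 1)))).compl
    have hM : (lamM (k + 1)).MutuallySingular
        (SignedMeasure.totalVariation (μ₀.restrict S)) := by
      refine ⟨{x | u x ≠ -((k : ℝ) + 1)}, hMset, hconcM k, ?_⟩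
      rw [tv_restrict _ (hSm k), Measure.restrict_apply hMset.compl]
      convert measure_empty
      · ext x
        simp only [Set.mem_inter_iff, Set.mem_compl_iff, Set.mem_setOf_eq, not_not,
          Set.mem_empty_iff_false, iff_false, not_and, hSdef]
        intro hx
        rw [hx]
        simp only [Set.mem_setOf_eq, not_lt, abs_neg]
        rw [abs_of_nonneg (by positivity)]
      · infer_instance
    have hPM : (lamP (k + 1)).MutuallySingular (lamM (k + 1)) := by
      refine ⟨{x | u x ≠ ((k : ℝ) + 1)}, hPset, hconcP k, ?_⟩
      refine measure_mono_null ?_ (hconcM k)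
      intro x hx
      simp only [Set.mem_compl_iff, Set.mem_setOf_eq, not_not] at hx
      simp only [Set.mem_setOf_eq, hx]
      intro habs
      have : (0 : ℝ) < (k : ℝ) + 1 := by positivity
      linarith
    rw [tv_sum_singular _ _ _ hPM hP hM, tv_restrict _ (hSm k)]
  -- identify |μ|
  have keyLim : (μ₀ + μsp.toSignedMeasure - μsm.toSignedMeasure).totalVariation
      = μ₀.totalVariation + μsp + μsm := tv_sum_singular _ _ _ hsing1 hsing2 hsing3
  simp only [key, keyLim]
  -- split the integrals over sums of measures
  have hsplit : ∀ (ν₁ ν₂ ν₃ : Measure X) [IsFiniteMeasure ν₁] [IsFiniteMeasure ν₂]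
      [IsFiniteMeasure ν₃],
      ∫ x, f x ∂(ν₁ + ν₂ + ν₃) = (∫ x, f x ∂ν₁) + (∫ x, f x ∂ν₂) + (∫ x, f x ∂ν₃) := by
    intro ν₁ ν₂ ν₃ _ _ _
    rw [integral_add_measure (f.integrable _) (f.integrable _),
      integral_add_measure (f.integrable _) (f.integrable _)]
  simp only [hsplit]
  -- convergence of the restricted piece
  have hfirst : Tendsto
      (fun k : ℕ => ∫ x, f x ∂(μ₀.totalVariation.restrict {x | |u x| < ((k : ℝ) + 1)}))
      atTop (nhds (∫ x, f x ∂μ₀.totalVariation)) := by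
    have hrw : ∀ k : ℕ,
        ∫ x, f x ∂(μ₀.totalVariation.restrict {x | |u x| < ((k : ℝ) + 1)})
          = ∫ x, Set.indicator {x | |u x| < ((k : ℝ) + 1)} (fun x => f x) x
              ∂μ₀.totalVariation := fun k => (integral_indicator (hSm k)).symm
    simp only [hrw]
    refine tendsto_integral_of_dominated_convergence (fun _ => ‖f‖) ?_ ?_ ?_ ?_
    · exact fun k =>
        (f.continuous.stronglyMeasurable.indicator (hSm k)).aestronglyMeasurable
    · exact integrable_const _
    · intro k
      filter_upwards with x
      refine le_trans (norm_indicator_le_norm_self _ _) (f.norm_coe_le_norm x)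
    · filter_upwards with x
      have : ∀ᶠ k : ℕ in atTop,
          Set.indicator {x | |u x| < ((k : ℝ) + 1)} (fun x => f x) x = f x := by
        filter_upwards [eventually_ge_atTop ⌈|u x|⌉₊] with k hk
        apply Set.indicator_of_mem
        simp only [Set.mem_setOf_eq]
        calc |u x| ≤ (⌈|u x|⌉₊ : ℝ) := Nat.le_ceil _
          _ ≤ (k : ℝ) := by exact_mod_cast hk
          _ < (k : ℝ) + 1 := by linarith
      exact Tendsto.congr' (this.mono fun k hk => hk.symm) tendsto_const_nhds
  exact (hfirst.add (hnarrowP f)).add (hnarrowM f)
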